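/- Let G > 0 and let f : ℝ → ℝ be convex and continuous on [0,G]. Then for every price p, the function q ↦ sup D(q) tends to inf D(p) as q tends to p from the left; that is, min g^d(p) = lim_{ε→0⁺} max g^d(p−ε). -/

import Mathlib

open Filter Topology

/-- The demand correspondence: maximizers of the profit `p·z − f z` over `[0, G]`. -/
def demandSet (f : ℝ → ℝ) (G p : ℝ) : Set ℝ :=
  {z ∈ Set.Icc (0 : ℝ) G | ∀ w ∈ Set.Icc (0 : ℝ) G, p * z - f z ≥ p * w - f w}

section aux

variable {f : ℝ → ℝ} {G : ℝ}

lemma demand_subset (p : ℝ) : demandSet f G p ⊆ Set.Icc 0 G := fun _ hz => hz.1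

lemma profit_cont (hcont : ContinuousOn f (Set.Icc (0 : ℝ) G)) (p : ℝ) :
    ContinuousOn (fun z => p * z - f z) (Set.Icc (0 : ℝ) G) :=
  (continuousOn_const.mul continuousOn_id).sub hcont

lemma demand_nonempty (hG : 0 < G) (hcont : ContinuousOn f (Set.Icc (0 : ℝ) G)) (p : ℝ) :
    (demandSet f G p).Nonempty := by
  obtain ⟨z, hz, hmax⟩ := (isCompact_Icc (a := (0:ℝ)) (b := G)).exists_isMaxOn
    (Set.nonempty_Icc.2 hG.le) (profit_cont hcont p)
  exact ⟨z, hz, fun w hw => hmax hw⟩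

lemma demand_isCompact (hG : 0 < G) (hcont : ContinuousOn f (Set.Icc (0 : ℝ) G)) (p : ℝ) :
    IsCompact (demandSet f G p) := by
  refine IsCompact.of_isClosed_subset isCompact_Icc ?_ (demand_subset p)
  have heq : demandSet f G p =
      ⋂ w ∈ Set.Icc (0:ℝ) G,
        (Set.Icc (0:ℝ) G ∩ (fun z => p * z - f z) ⁻¹' Set.Ici (p * w - f w)) := by
    ext z
    simp only [demandSet, Set.mem_setOf_eq, Set.mem_iInter, Set.mem_inter_iff,
      Set.mem_preimage, Set.mem_Ici]
    constructor
    · rintro ⟨hz, h⟩ w hw; exact ⟨hz, h w hw⟩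
    · intro h
      have h0 : (0:ℝ) ∈ Set.Icc (0:ℝ) G := ⟨le_refl 0, hG.le⟩
      exact ⟨(h 0 h0).1, fun w hw => (h w hw).2⟩
  rw [heq]
  exact isClosed_biInter fun w _ =>
    (profit_cont hcont p).preimage_isClosed_of_isClosed isClosed_Icc isClosed_Ici

lemma demand_mono {p q : ℝ} (hqp : q < p) {z z' : ℝ}
    (hz : z ∈ demandSet f G q) (hz' : z' ∈ demandSet f G p) : z ≤ z' := by
  have h1 := hz.2 z' hz'.1
  have h2 := hz'.2 z hz.1
  nlinarith

end aux

/-- `min g^d(p) = lim_{ε→0⁺} max g^d(p−ε)`. -/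
theorem sup_demandSet_tendsto_left (f : ℝ → ℝ) (G : ℝ) (hG : 0 < G)
    (hconv : ConvexOn ℝ (Set.Icc (0 : ℝ) G) f)
    (hcont : ContinuousOn f (Set.Icc (0 : ℝ) G)) (p : ℝ) :
    Tendsto (fun q => sSup (demandSet f G q)) (𝓝[<] p) (𝓝 (sInf (demandSet f G p))) := by
  set m := sInf (demandSet f G p) with hm_def
  have hDp := demand_isCompact hG hcont p
  have hDpne := demand_nonempty hG hcont p
  have hm : m ∈ demandSet f G p := hDp.sInf_mem hDpne
  have hmIcc : m ∈ Set.Icc (0:ℝ) G := hm.1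
  -- sup of demand set at q is in the demand set
  have hsup_mem : ∀ q : ℝ, sSup (demandSet f G q) ∈ demandSet f G q := fun q =>
    (demand_isCompact hG hcont q).sSup_mem (demand_nonempty hG hcont q)
  rw [Metric.tendsto_nhdsWithin_nhds]
  intro ε hε
  -- lower bound threshold δ
  -- Case split: whether m - ε < 0
  by_cases hcase : m - ε < 0
  · -- trivial: sSup D q ≥ 0 > m - ε always, and sSup D q ≤ m for q < p
    refine ⟨1, one_pos, fun {q} hq hdist => ?_⟩
    have hq' : q < p := hq
    have hsq := hsup_mem q
    have hub : sSup (demandSet f G q) ≤ m := demand_mono hq' hsq hm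
    have hlb : 0 ≤ sSup (demandSet f G q) := hsq.1.1
    rw [Real.dist_eq, abs_lt]
    constructor <;> linarith
  · push_neg at hcase
    -- K = Icc 0 (m - ε), strictly suboptimal at price p
    have hKsub : Set.Icc (0:ℝ) (m - ε) ⊆ Set.Icc (0:ℝ) G := by
      apply Set.Icc_subset_Icc le_rfl
      linarith [hmIcc.2]
    have hKcomp : IsCompact (Set.Icc (0:ℝ) (m - ε)) := isCompact_Icc
    have hKne : (Set.Icc (0:ℝ) (m - ε)).Nonempty := Set.nonempty_Icc.2 hcase
    obtain ⟨w₀, hw₀, hw₀min⟩ := hKcomp.exists_isMinOn hKne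
      (continuousOn_const.sub ((profit_cont hcont p).mono hKsub) : ContinuousOn (fun w => (p * m - f m) - (p * w - f w)) _)
    set c := (p * m - f m) - (p * w₀ - f w₀) with hc_def
    have hc : 0 < c := by
      have hle : p * w₀ - f w₀ ≤ p * m - f m := hm.2 w₀ (hKsub hw₀)
      rcases lt_or_eq_of_le hle with h | h
      · linarith
      · exfalso
        have hw₀D : w₀ ∈ demandSet f G p := by
          refine ⟨hKsub hw₀, fun w hw => ?_⟩
          rw [ge_iff_le, h]
          exact hm.2 w hw
        have : m ≤ w₀ := csInf_le ⟨0, fun x hx => hx.1.1⟩ hw₀D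
        have := hw₀.2
        linarith
    have hcK : ∀ w ∈ Set.Icc (0:ℝ) (m - ε), p * w - f w ≤ p * m - f m - c := by
      intro w hw
      have := hw₀min hw
      simp only [Set.mem_setOf_eq, Pi.sub_apply] at this
      linarith [this]
    refine ⟨c / G, div_pos hc hG, fun {q} hq hdist => ?_⟩
    have hq' : q < p := hq
    rw [Real.dist_eq, abs_lt] at hdist
    have hpq : p - q < c / G := by linarith [hdist.1]
    have hsq := hsup_mem q
    set s := sSup (demandSet f G q) with hs_def
    have hub : s ≤ m := demand_mono hq' hsq hm
    -- lower bound : s > m - ε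
    have hlb : m - ε < s := by
      by_contra hcon
      push_neg at hcon
      have hsK : s ∈ Set.Icc (0:ℝ) (m - ε) := ⟨hsq.1.1, hcon⟩
      -- q·m - f m > q·s - f s
      have h1 : p * s - f s ≤ p * m - f m - c := hcK s hsK
      have h2 : (p - q) * m ≤ (p - q) * G := by
        apply mul_le_mul_of_nonneg_left hmIcc.2
        linarith
      have h3 : (p - q) * G < c := by
        rw [← lt_div_iff₀ hG] at *
        exact hpq
      have h4 : 0 ≤ (p - q) * s := mul_nonneg (by linarith) hsq.1.1
      have hopt := hsq.2 m hmIcc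
      nlinarith
    rw [Real.dist_eq, abs_lt]
    constructor <;> linarith
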